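/- (One-dimensional case: recurrence from the ergodic theorem.) Let (Σ, F, λ) be an ergodic probability-measure-preserving dynamical system and let f : Σ → ℤ be integrable with ∫_Σ f dλ = 0, with cocycle {S_n}. Then the cocycle {S_n} is recurrent: for λ-a.e. ξ ∈ Σ there exist infinitely many n ∈ ℕ with S_n(ξ) = 0. -/

import Mathlib

open MeasureTheory Filter

section CocycleAux

open Finset Function

variable {α : Type*} [MeasurableSpace α] {μ : Measure α}

private lemma birkhoff_measurable {F : α → α} (hFm : Measurable F) {g : α → ℝ}
    (hgm : Measurable g) (n : ℕ) : Measurable (birkhoffSum F g n) := by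
  have : birkhoffSum F g n = fun x => ∑ k ∈ Finset.range n, g (F^[k] x) := rfl
  rw [this]
  exact Finset.measurable_sum _ fun k _ => hgm.comp (hFm.iterate k)

private lemma birkhoff_integrable {F : α → α} (hF : MeasurePreserving F μ μ) {g : α → ℝ}
    (hgi : Integrable g μ) (n : ℕ) : Integrable (birkhoffSum F g n) μ := by
  induction n with
  | zero =>
      rw [birkhoffSum_zero']
      exact integrable_zero α ℝ μ
  | succ n ih =>
      have h1 : Integrable (g ∘ F^[n]) μ :=
        ((hF.iterate n).integrable_comp hgi.aestronglyMeasurable).2 hgi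
      have : birkhoffSum F g (n + 1) = fun x => birkhoffSum F g n x + g (F^[n] x) :=
        funext fun x => birkhoffSum_succ F g n x
      rw [this]
      exact ih.add h1

/-- The running maximum `max_{0 ≤ n ≤ N} S_n`. -/
private noncomputable def maxS (F : α → α) (g : α → ℝ) (N : ℕ) (x : α) : ℝ :=
  (Finset.range (N + 1)).sup' Finset.nonempty_range_add_one fun n => birkhoffSum F g n x

private lemma maxS_nonneg (F : α → α) (g : α → ℝ) (N : ℕ) (x : α) : 0 ≤ maxS F g N x := by
  have h0 : (0 : ℕ) ∈ Finset.range (N + 1) := Finset.mem_range.2 (Nat.succ_pos N)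
  have h := Finset.le_sup' (fun n => birkhoffSum F g n x) h0
  rw [birkhoffSum_zero] at h
  exact h

private lemma maxS_measurable {F : α → α} (hFm : Measurable F) {g : α → ℝ}
    (hgm : Measurable g) (N : ℕ) : Measurable (maxS F g N) := by
  have : maxS F g N = (Finset.range (N + 1)).sup' Finset.nonempty_range_add_one
      (fun n => birkhoffSum F g n) := by
    funext x
    rw [Finset.sup'_apply]
    rfl
  rw [this]
  exact Finset.measurable_sup' _ fun n _ => birkhoff_measurable hFm hgm n

private lemma maxS_mono (F : α → α) (g : α → ℝ) {N M : ℕ} (h : N ≤ M) (x : α) :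
    maxS F g N x ≤ maxS F g M x := by
  apply Finset.sup'_le
  intro n hn
  have hmem : n ∈ Finset.range (M + 1) := by
    rw [Finset.mem_range] at hn ⊢; omega
  exact Finset.le_sup' (fun n => birkhoffSum F g n x) hmem

private lemma maxS_succ (F : α → α) (g : α → ℝ) (N : ℕ) (x : α) :
    maxS F g (N + 1) x = birkhoffSum F g (N + 1) x ⊔ maxS F g N x := by
  apply le_antisymm
  · apply Finset.sup'_le
    intro n hn
    rcases Nat.lt_succ_iff_lt_or_eq.1 (Finset.mem_range.1 hn) with h | h
    · exact le_trans (Finset.le_sup' (fun n => birkhoffSum F g n x) (Finset.mem_range.2 h)) le_sup_right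
    · subst h; exact le_sup_left
  · apply sup_le
    · exact Finset.le_sup' (fun n => birkhoffSum F g n x)
        (Finset.mem_range.2 (Nat.lt_succ_self _))
    · exact maxS_mono F g (Nat.le_succ N) x

private lemma maxS_integrable {F : α → α} (hF : MeasurePreserving F μ μ) {g : α → ℝ}
    (hgi : Integrable g μ) (N : ℕ) : Integrable (maxS F g N) μ := by
  induction N with
  | zero =>
      have h0 : maxS F g 0 = fun _ => (0 : ℝ) := by
        funext x
        simp [maxS, birkhoffSum_zero]
      rw [h0]
      exact integrable_zero α ℝ μ
  | succ N ih =>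
      have h1 : maxS F g (N + 1) = (birkhoffSum F g (N + 1)) ⊔ (maxS F g N) := by
        funext x; exact maxS_succ F g N x
      rw [h1]
      exact (birkhoff_integrable hF hgi (N + 1)).sup ih

private lemma maxS_le (F : α → α) (g : α → ℝ) (N : ℕ) (x : α) :
    maxS F g N x ≤ 0 ⊔ (g x + maxS F g N (F x)) := by
  apply Finset.sup'_le
  intro n hn
  match n with
  | 0 => simpa [birkhoffSum_zero] using le_max_left (0 : ℝ) _
  | m + 1 =>
      rw [birkhoffSum_succ']
      refine le_trans ?_ (le_max_right _ _)
      have hm : m ∈ Finset.range (N + 1) := by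
        rw [Finset.mem_range] at hn ⊢; omega
      exact add_le_add (le_refl _) (Finset.le_sup' (fun n => birkhoffSum F g n (F x)) hm)

/-- **Garsia's maximal ergodic theorem**: per-level version. -/
private lemma met_aux [IsFiniteMeasure μ] {F : α → α} (hF : MeasurePreserving F μ μ) {g : α → ℝ}
    (hgm : Measurable g) (hgi : Integrable g μ) (N : ℕ) :
    0 ≤ ∫ x in {x | 0 < maxS F g N x}, g x ∂μ := by
  set φ := maxS F g N with hφ
  set E := {x | 0 < φ x} with hE
  have hφm : Measurable φ := maxS_measurable hF.measurable hgm N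
  have hφi : Integrable φ μ := maxS_integrable hF hgi N
  have hEm : MeasurableSet E := measurableSet_lt measurable_const hφm
  have hφFi : Integrable (fun x => φ (F x)) μ := by
    have := (hF.integrable_comp hφi.aestronglyMeasurable).2 hφi
    exact this
  -- On E, φ x - φ (F x) ≤ g x
  have key : ∀ x ∈ E, φ x - φ (F x) ≤ g x := by
    intro x hx
    have hx0 : 0 < φ x := hx
    have h1 : φ x ≤ 0 ⊔ (g x + φ (F x)) := maxS_le F g N x
    rcases le_sup_iff.1 h1 with h | h
    · exact absurd (lt_of_lt_of_le hx0 h) (lt_irrefl 0)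
    · linarith
  -- ∫ φ∘F = ∫ φ
  have hcomp : ∫ x, φ (F x) ∂μ = ∫ x, φ x ∂μ := by
    have hmap : Measure.map F μ = μ := hF.map_eq
    calc ∫ x, φ (F x) ∂μ = ∫ y, φ y ∂(Measure.map F μ) :=
          (integral_map hF.measurable.aemeasurable
            (by rw [hmap]; exact hφm.aestronglyMeasurable)).symm
        _ = ∫ y, φ y ∂μ := by rw [hmap]
  have hsub : Integrable (fun x => φ x - φ (F x)) μ := hφi.sub hφFi
  have h3 : ∫ x, (φ x - φ (F x)) ∂μ = 0 := by
    rw [integral_sub hφi hφFi, hcomp, sub_self]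
  have h4 : ∫ x in E, (φ x - φ (F x)) ∂μ + ∫ x in Eᶜ, (φ x - φ (F x)) ∂μ = 0 := by
    rw [integral_add_compl hEm hsub, h3]
  have h5 : ∫ x in Eᶜ, (φ x - φ (F x)) ∂μ ≤ 0 := by
    have : ∀ x ∈ Eᶜ, φ x - φ (F x) ≤ (0 : ℝ) := by
      intro x hx
      have hx0 : ¬ 0 < φ x := hx
      have h0 : φ x = 0 := le_antisymm (not_lt.1 hx0) (maxS_nonneg F g N x)
      have := maxS_nonneg F g N (F x)
      rw [h0]; linarith
    calc ∫ x in Eᶜ, (φ x - φ (F x)) ∂μ ≤ ∫ _x in Eᶜ, (0 : ℝ) ∂μ :=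
          setIntegral_mono_on hsub.integrableOn (integrable_const 0).integrableOn
            hEm.compl this
      _ = 0 := by simp
  have h6 : 0 ≤ ∫ x in E, (φ x - φ (F x)) ∂μ := by linarith
  calc (0 : ℝ) ≤ ∫ x in E, (φ x - φ (F x)) ∂μ := h6
    _ ≤ ∫ x in E, g x ∂μ :=
        setIntegral_mono_on ((hsub).integrableOn) hgi.integrableOn hEm key

/-- **Garsia's maximal ergodic theorem.** -/
private lemma met [IsFiniteMeasure μ] {F : α → α} (hF : MeasurePreserving F μ μ) {g : α → ℝ}
    (hgm : Measurable g) (hgi : Integrable g μ) :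
    0 ≤ ∫ x in {x | ∃ n : ℕ, 0 < birkhoffSum F g (n + 1) x}, g x ∂μ := by
  have hEN : ∀ N : ℕ, MeasurableSet {x | 0 < maxS F g N x} := fun N =>
    measurableSet_lt measurable_const (maxS_measurable hF.measurable hgm N)
  have hmono : Monotone (fun N => {x | 0 < maxS F g N x}) := by
    intro N M h x hx
    exact lt_of_lt_of_le hx (maxS_mono F g h x)
  have hunion : (⋃ N, {x | 0 < maxS F g N x}) = {x | ∃ n : ℕ, 0 < birkhoffSum F g (n + 1) x} := by
    ext x
    simp only [Set.mem_iUnion, Set.mem_setOf_eq]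
    constructor
    · rintro ⟨N, hN⟩
      obtain ⟨n, hn, hpos⟩ := (Finset.lt_sup'_iff _).1 hN
      match n with
      | 0 => simp [birkhoffSum_zero] at hpos
      | m + 1 => exact ⟨m, hpos⟩
    · rintro ⟨n, hn⟩
      refine ⟨n + 1, lt_of_lt_of_le hn ?_⟩
      exact Finset.le_sup' (fun m => birkhoffSum F g m x)
        (Finset.mem_range.2 (by omega))
  have htend := tendsto_setIntegral_of_monotone hEN hmono
    (hgi.integrableOn : IntegrableOn g (⋃ N, {x | 0 < maxS F g N x}) μ)
  rw [hunion] at htend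
  exact ge_of_tendsto' htend fun N => met_aux hF hgm hgi N

/-- **Half of Birkhoff's theorem, via the maximal ergodic theorem and ergodicity**:
if `c > ∫ g`, then almost surely the Birkhoff sums satisfy `S_n ≤ c n + M` for some
constant `M`. -/
private lemma birkhoff_upper [IsProbabilityMeasure μ] {F : α → α} (hF : Ergodic F μ)
    {g : α → ℝ} (hgm : Measurable g) (hgi : Integrable g μ) {c : ℝ}
    (hc : ∫ x, g x ∂μ < c) :
    ∀ᵐ x ∂μ, ∃ M : ℕ, ∀ n : ℕ, birkhoffSum F g n x ≤ c * n + M := by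
  set g' : α → ℝ := fun x => g x - c with hg'
  have hg'm : Measurable g' := hgm.sub measurable_const
  have hg'i : Integrable g' μ := hgi.sub (integrable_const c)
  have hbs : ∀ n x, birkhoffSum F g' n x = birkhoffSum F g n x - c * n := by
    intro n x
    simp only [birkhoffSum, hg', Finset.sum_sub_distrib, Finset.sum_const, Finset.card_range,
      nsmul_eq_mul, mul_comm]
  set J : Set α := {x | ∀ M : ℕ, ∃ n : ℕ, (M : ℝ) < birkhoffSum F g' n x} with hJ
  have hJm : MeasurableSet J := by
    have : J = ⋂ M : ℕ, ⋃ n : ℕ, {x | (M : ℝ) < birkhoffSum F g' n x} := by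
      ext x; simp [hJ]
    rw [this]
    exact MeasurableSet.iInter fun M => MeasurableSet.iUnion fun n =>
      measurableSet_lt measurable_const (birkhoff_measurable hF.measurable hg'm n)
  -- real-threshold characterization of J
  have hJreal : ∀ x, x ∈ J ↔ ∀ r : ℝ, ∃ n : ℕ, r < birkhoffSum F g' n x := by
    intro x
    constructor
    · intro hx r
      obtain ⟨n, hn⟩ := hx ⌈r⌉₊
      exact ⟨n, lt_of_le_of_lt (Nat.le_ceil r) hn⟩
    · intro hx M; exact hx M
  -- J is exactly invariant
  have hJinv : F ⁻¹' J = J := by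
    ext x
    simp only [Set.mem_preimage]
    rw [hJreal, hJreal]
    constructor
    · -- F x ∈ J → x ∈ J
      intro hFx r
      obtain ⟨n, hn⟩ := hFx (r - g' x)
      refine ⟨n + 1, ?_⟩
      rw [birkhoffSum_succ']
      linarith
    · -- x ∈ J → F x ∈ J
      intro hx r
      obtain ⟨n, hn⟩ := hx ((r + g' x) ⊔ 0)
      have hn0 : n ≠ 0 := by
        intro h
        rw [h, birkhoffSum_zero] at hn
        have : (0 : ℝ) ≤ (r + g' x) ⊔ 0 := le_max_right _ _
        linarith
      obtain ⟨m, rfl⟩ := Nat.exists_eq_succ_of_ne_zero hn0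
      refine ⟨m, ?_⟩
      rw [birkhoffSum_succ'] at hn
      have : r + g' x ≤ (r + g' x) ⊔ 0 := le_max_left _ _
      linarith
  rcases hF.toPreErgodic.ae_empty_or_univ hJm hJinv with h | h
  · -- J is null: a.e. x has the required bound
    have hnm : ∀ᵐ x ∂μ, x ∉ J := by
      have hμJ : μ J = 0 := ae_eq_empty.1 h
      exact measure_eq_zero_iff_ae_notMem.1 hμJ
    filter_upwards [hnm] with x hx
    simp only [hJ, Set.mem_setOf_eq, not_forall, not_exists, not_lt] at hx
    obtain ⟨M, hM⟩ := hx
    refine ⟨M, fun n => ?_⟩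
    have := hM n
    rw [hbs] at this
    linarith
  · -- J is co-null: contradiction with the maximal ergodic theorem
    exfalso
    have hμJc : μ Jᶜ = 0 := ae_eq_univ.1 h
    set E := {x | ∃ n : ℕ, 0 < birkhoffSum F g' (n + 1) x} with hEdef
    have hJE : J ⊆ E := by
      intro x hx
      obtain ⟨n, hn⟩ := hx 0
      have hn0 : n ≠ 0 := by
        intro h0; rw [h0, birkhoffSum_zero] at hn; simpa using hn
      obtain ⟨m, rfl⟩ := Nat.exists_eq_succ_of_ne_zero hn0
      exact ⟨m, by simpa using hn⟩
    have hμEc : μ Eᶜ = 0 :=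
      measure_mono_null (Set.compl_subset_compl.2 hJE) hμJc
    have hEm : MeasurableSet E := by
      have hEeq : E = ⋃ n : ℕ, {x | 0 < birkhoffSum F g' (n + 1) x} := by
        ext x; simp [hEdef]
      rw [hEeq]
      exact MeasurableSet.iUnion fun n =>
        measurableSet_lt measurable_const (birkhoff_measurable hF.measurable hg'm (n + 1))
    have hint : 0 ≤ ∫ x in E, g' x ∂μ := met hF.toMeasurePreserving hg'm hg'i
    have hEfull : ∫ x in E, g' x ∂μ = ∫ x, g' x ∂μ := by
      rw [← integral_add_compl hEm hg'i]
      have : ∫ x in Eᶜ, g' x ∂μ = 0 := by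
        rw [Measure.restrict_eq_zero.2 hμEc, integral_zero_measure]
      rw [this, add_zero]
    have hg'int : ∫ x, g' x ∂μ = (∫ x, g x ∂μ) - c := by
      rw [hg']
      rw [integral_sub hgi (integrable_const c), integral_const]
      simp
    rw [hEfull, hg'int] at hint
    linarith

end CocycleAux

/-- **One-dimensional case: recurrence from the ergodic theorem.** Let `(α, F, μ)` be an
ergodic probability-measure-preserving dynamical system and `f : α → ℤ` integrable with
`∫ f dμ = 0`, with cocycle `S n ξ = ∑_{k<n} f (F^k ξ)`. Then the cocycle is recurrent:
for a.e. `ξ` there are infinitely many `n` with `S n ξ = 0`. -/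
theorem cocycle_recurrent_of_ergodic_zero_mean
    {α : Type*} [MeasurableSpace α] (μ : Measure α) [IsProbabilityMeasure μ]
    (F : α → α) (hF : Ergodic F μ)
    (f : α → ℤ) (hf : Measurable f)
    (hint : Integrable (fun ξ => (f ξ : ℝ)) μ)
    (hmean : ∫ ξ, (f ξ : ℝ) ∂μ = 0)
    (S : ℕ → α → ℤ)
    (hS : ∀ n ξ, S n ξ = ∑ k ∈ Finset.range n, f (F^[k] ξ)) :
    ∀ᵐ ξ ∂μ, ∃ᶠ n in atTop, S n ξ = 0 := by
  classical
  set g : α → ℝ := fun x => (f x : ℝ) with hg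
  have hgm : Measurable g := by
    have : Measurable (Int.cast : ℤ → ℝ) := measurable_from_top
    exact this.comp hf
  have hScast : ∀ (n : ℕ) (x : α), birkhoffSum F g n x = ((S n x : ℤ) : ℝ) := by
    intro n x
    rw [hS n x]
    push_cast
    rfl
  have hSbs : ∀ (n : ℕ) (x : α), S n x = birkhoffSum F f n x := fun n x => hS n x
  have hSadd : ∀ (m k : ℕ) (x : α), S (m + k) x = S m x + S k (F^[m] x) := by
    intro m k x
    rw [hSbs, hSbs, hSbs, birkhoffSum_add]
  have hSm : ∀ n : ℕ, Measurable (S n) := by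
    intro n
    have : S n = fun x => ∑ k ∈ Finset.range n, f (F^[k] x) := funext fun x => hS n x
    rw [this]
    exact Finset.measurable_sum _ fun k _ => hf.comp (hF.measurable.iterate k)
  set A : Set α := {x | ∀ n : ℕ, S (n + 1) x ≠ 0} with hA
  have hAm : MeasurableSet A := by
    have : A = ⋂ n : ℕ, {x | S (n + 1) x ≠ 0} := by ext x; simp [hA]
    rw [this]
    exact MeasurableSet.iInter fun n =>
      (hSm (n + 1) (measurableSet_singleton (0 : ℤ))).compl
  -- Step 1: μ A = 0 (Atkinson argument)
  have hA0 : μ A = 0 := by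
    by_contra hAne
    set a : ℝ := (μ A).toReal with hadef
    have ha : 0 < a := ENNReal.toReal_pos hAne (measure_ne_top μ A)
    set gA : α → ℝ := A.indicator fun _ => 1 with hgA
    have hgAm : Measurable gA := measurable_const.indicator hAm
    have hgAi : Integrable gA μ := by
      rw [hgA, integrable_indicator_iff hAm]
      exact (integrable_const 1).integrableOn
    have hgAint : ∫ x, gA x ∂μ = a := by
      rw [hgA, integral_indicator hAm, setIntegral_const, smul_eq_mul, mul_one]
      rfl
    have hbsneg : ∀ (h : α → ℝ) (n : ℕ) (x : α),
        birkhoffSum F (fun y => -h y) n x = -birkhoffSum F h n x := by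
      intro h n x
      simp [birkhoffSum, Finset.sum_neg_distrib]
    have h1 := birkhoff_upper hF hgm hint (c := a / 12) (by rw [hmean]; positivity)
    have h2 := birkhoff_upper hF (g := fun x => -g x) hgm.neg hint.neg (c := a / 12)
      (by rw [integral_neg, hmean, neg_zero]; positivity)
    have h3 := birkhoff_upper hF (g := fun x => -gA x) hgAm.neg hgAi.neg (c := -(a / 2))
      (by rw [integral_neg, hgAint]; linarith)
    have hne : (MeasureTheory.ae μ).NeBot := by
      refine ae_neBot.2 ?_
      exact IsProbabilityMeasure.ne_zero μ
    obtain ⟨x, ⟨⟨M1, hM1⟩, ⟨M2, hM2⟩⟩, ⟨M3, hM3⟩⟩ := ((h1.and h2).and h3).exists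
    -- absolute-value bound on the integer cocycle
    set C : ℕ := max M1 M2 with hC
    have habs : ∀ n : ℕ, |((S n x : ℤ) : ℝ)| ≤ a / 12 * n + C := by
      intro n
      rw [abs_le]
      constructor
      · have := hM2 n
        rw [hbsneg] at this
        rw [← hScast]
        have hc2 : (M2 : ℝ) ≤ (C : ℝ) := by exact_mod_cast le_max_right M1 M2
        linarith
      · have := hM1 n
        rw [← hScast]
        have hc1 : (M1 : ℝ) ≤ (C : ℝ) := by exact_mod_cast le_max_left M1 M2
        linarith
    -- visit count lower bound
    have hvisit : ∀ n : ℕ, a / 2 * n - M3 ≤ birkhoffSum F gA n x := by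
      intro n
      have := hM3 n
      rw [hbsneg] at this
      linarith
    -- the contradiction at a large time N
    obtain ⟨N, hN⟩ := exists_nat_gt ((M3 + 2 * C + 3) / (a / 3))
    have hNbig : (M3 : ℝ) + 2 * C + 3 < a / 3 * N := by
      rw [div_lt_iff₀ (by positivity)] at hN
      linarith
    set V : Finset ℕ := (Finset.range N).filter fun k => F^[k] x ∈ A with hV
    have hcard : (V.card : ℝ) = birkhoffSum F gA N x := by
      rw [birkhoffSum]
      simp only [hgA, Set.indicator_apply]
      rw [Finset.sum_boole]
    -- injectivity of n ↦ S n x on V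
    have hinj : Set.InjOn (fun n => S n x) ↑V := by
      have hkey : ∀ m n, m ∈ V → n ∈ V → m < n → S m x ≠ S n x := by
        intro m n hm hn hmn heq
        have hmA : F^[m] x ∈ A := (Finset.mem_filter.1 hm).2
        have hsplit : S n x = S m x + S (n - m) (F^[m] x) := by
          have := hSadd m (n - m) x
          rwa [Nat.add_sub_cancel' (le_of_lt hmn)] at this
        have hz : S (n - m) (F^[m] x) = 0 := by
          rw [heq] at hsplit
          linarith [hsplit]
        obtain ⟨j, hj⟩ := Nat.exists_eq_succ_of_ne_zero (by omega : n - m ≠ 0)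
        rw [hj] at hz
        exact hmA j hz
      intro m hm n hn heq
      by_contra hne2
      rcases lt_or_gt_of_ne hne2 with h | h
      · exact hkey m n hm hn h heq
      · exact hkey n m hn hm h heq.symm
    -- image is contained in an integer interval
    set B : ℝ := a / 12 * N + C with hB
    have hBnonneg : 0 ≤ B := by positivity
    have hmaps : ∀ n ∈ V, S n x ∈ Finset.Icc (-⌈B⌉) ⌈B⌉ := by
      intro n hn
      have hnN : n < N := Finset.mem_range.1 (Finset.mem_filter.1 hn).1
      have h2 : |((S n x : ℤ) : ℝ)| ≤ B := by
        refine le_trans (habs n) ?_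
        rw [hB]
        have : (n : ℝ) ≤ (N : ℝ) := by exact_mod_cast le_of_lt hnN
        nlinarith
      rw [abs_le] at h2
      rw [Finset.mem_Icc]
      constructor
      · have : ((-⌈B⌉ : ℤ) : ℝ) ≤ ((S n x : ℤ) : ℝ) := by
          push_cast
          linarith [Int.le_ceil B]
        exact_mod_cast this
      · have : ((S n x : ℤ) : ℝ) ≤ ((⌈B⌉ : ℤ) : ℝ) := by
          push_cast
          linarith [Int.le_ceil B]
        exact_mod_cast this
    have hcardle : V.card ≤ (Finset.Icc (-⌈B⌉) ⌈B⌉).card :=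
      Finset.card_le_card_of_injOn _ hmaps hinj
    have hIcc : ((Finset.Icc (-⌈B⌉) ⌈B⌉).card : ℝ) ≤ 2 * B + 3 := by
      rw [Int.card_Icc]
      have hceil : (0 : ℤ) ≤ ⌈B⌉ := Int.ceil_nonneg hBnonneg
      have h4 : (⌈B⌉ + 1 - -⌈B⌉).toNat = (2 * ⌈B⌉ + 1).toNat := by ring_nf
      rw [h4]
      have h5 : ((2 * ⌈B⌉ + 1).toNat : ℤ) = 2 * ⌈B⌉ + 1 := Int.toNat_of_nonneg (by omega)
      have h6 : (((2 * ⌈B⌉ + 1).toNat : ℤ) : ℝ) = 2 * (⌈B⌉ : ℝ) + 1 := by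
        rw [h5]; push_cast; ring
      have h7 : (((2 * ⌈B⌉ + 1).toNat : ℕ) : ℝ) = (((2 * ⌈B⌉ + 1).toNat : ℤ) : ℝ) := by
        push_cast; ring
      rw [h7, h6]
      have := Int.ceil_lt_add_one B
      linarith
    -- combine
    have hfinal : a / 2 * N - M3 ≤ 2 * B + 3 := by
      calc a / 2 * N - M3 ≤ birkhoffSum F gA N x := hvisit N
        _ = (V.card : ℝ) := (hcard).symm
        _ ≤ ((Finset.Icc (-⌈B⌉) ⌈B⌉).card : ℝ) := by exact_mod_cast hcardle
        _ ≤ 2 * B + 3 := hIcc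
    rw [hB] at hfinal
    nlinarith
  -- Step 2: propagate to infinitely many zeros
  have hG : ∀ᵐ x ∂μ, ∃ n : ℕ, S (n + 1) x = 0 := by
    have hnm := measure_eq_zero_iff_ae_notMem.1 hA0
    filter_upwards [hnm] with x hx
    simp only [hA, Set.mem_setOf_eq, not_forall, not_not] at hx
    exact hx
  have hGset : MeasurableSet {y | ∃ n : ℕ, S (n + 1) y = 0} := by
    have heq : {y | ∃ n : ℕ, S (n + 1) y = 0} = ⋃ n : ℕ, S (n + 1) ⁻¹' {0} := by
      ext y; simp
    rw [heq]
    exact MeasurableSet.iUnion fun n => hSm (n + 1) (measurableSet_singleton (0 : ℤ))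
  have hGk : ∀ᵐ x ∂μ, ∀ k : ℕ, ∃ n : ℕ, S (n + 1) (F^[k] x) = 0 := by
    rw [ae_all_iff]
    intro k
    have hmp := hF.toMeasurePreserving.iterate k
    exact (ae_map_iff hmp.measurable.aemeasurable hGset).1 (by rw [hmp.map_eq]; exact hG)
  filter_upwards [hGk] with x hx
  rw [Filter.frequently_atTop]
  have key : ∀ m : ℕ, ∃ n, m ≤ n ∧ S n x = 0 := by
    intro m
    induction m with
    | zero => exact ⟨0, le_refl 0, by rw [hS]; simp⟩
    | succ m ih =>
        obtain ⟨n, hmn, hzero⟩ := ih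
        obtain ⟨k, hk⟩ := hx n
        refine ⟨n + (k + 1), by omega, ?_⟩
        rw [hSadd n (k + 1) x, hzero, hk, add_zero]
  intro m
  obtain ⟨n, h1, h2⟩ := key m
  exact ⟨n, h1, h2⟩
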